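/- Let $d \geq 1$, and define the sequence of $T$-spaces $S_n^{(d)}$ of $k_0\langle X\rangle$ by $S_1^{(d)} = \{S^{(d)}\}^S$ and $S_{n+1}^{(d)} = (S_n^{(d)} S_1^{(d)})^S$. Then: (i) for all $m, n \geq 1$, $(S_m^{(d)} S_n^{(d)})^S = S_{m+n}^{(d)}$; and (ii) for all $m \geq 1$, $S_{2m+1}^{(d)} \subseteq S_{m+1}^{(d)} + S_1^{(d)}$. -/

import Mathlib

open scoped BigOperators

/-- The free non-unital associative algebra over `k` on countably many variables,
realized as the semigroup algebra of the free semigroup on `ℕ`. -/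
abbrev FA (k : Type*) [Field k] := MonoidAlgebra k (FreeSemigroup ℕ)

/-- The generator (variable) `x_i`. -/
noncomputable def Xg (k : Type*) [Field k] (i : ℕ) : FA k :=
  MonoidAlgebra.single (FreeSemigroup.of i) 1

/-- Product of a (nonempty) list in a non-unital semiring; `0` on the empty list. -/
def lprod {A : Type*} [NonUnitalSemiring A] : List A → A
  | [] => 0
  | [a] => a
  | a :: b :: l => a * lprod (b :: l)

/-- `n`-th power in a non-unital semiring (zero for `n = 0`). -/
def npow' {A : Type*} [NonUnitalSemiring A] (a : A) (n : ℕ) : A :=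
  lprod (List.replicate n a)

/-- The full multilinear symmetrization `S^{(d)}(y_1,…,y_d) = ∑_{σ ∈ Σ_d} y_{σ(1)} ⋯ y_{σ(d)}`. -/
def Ssym {A : Type*} [NonUnitalSemiring A] (d : ℕ) (y : Fin d → A) : A :=
  ∑ σ : Equiv.Perm (Fin d), lprod (List.ofFn (fun i => y (σ i)))

/-- A T-space: a subspace closed under all substitution endomorphisms
(non-unital algebra endomorphisms). -/
def IsTSpace (k : Type*) [Field k] (V : Submodule k (FA k)) : Prop :=
  ∀ (φ : FA k →ₙₐ[k] FA k), ∀ v ∈ V, φ v ∈ V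

/-- The T-space generated by a set `S`: the span of all substitution instances
of elements of `S`. -/
noncomputable def TSpan (k : Type*) [Field k] (S : Set (FA k)) : Submodule k (FA k) :=
  Submodule.span k {a | ∃ (φ : FA k →ₙₐ[k] FA k) (s : FA k), s ∈ S ∧ a = φ s}

/-- The set of products `u * v` with `u ∈ U`, `v ∈ V`. -/
def mulSet {k : Type*} [Field k] (U V : Submodule k (FA k)) : Set (FA k) :=
  {a | ∃ u ∈ U, ∃ v ∈ V, a = u * v}

/-- The T-spaces `S_n^{(d)}`: `S_1^{(d)}` is generated by `S^{(d)}(x_1,…,x_d)` and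
`S_{n+1}^{(d)} = (S_n^{(d)} S_1^{(d)})^S`. -/
noncomputable def Sn (k : Type*) [Field k] (d : ℕ) : ℕ → Submodule k (FA k)
  | 0 => ⊥
  | 1 => TSpan k {Ssym d (fun i => Xg k i)}
  | (n+2) => TSpan k (mulSet (Sn k d (n+1)) (Sn k d 1))

/-- The T-spaces `H_n`: `H_1` is generated by `x_1^p` and `H_{n+1} = (H_n H_1)^S`. -/
noncomputable def Hn (k : Type*) [Field k] (p : ℕ) : ℕ → Submodule k (FA k)
  | 0 => ⊥
  | 1 => TSpan k {npow' (Xg k 0) p}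
  | (n+2) => TSpan k (mulSet (Hn k p (n+1)) (Hn k p 1))

/-- The word `x_1^p x_2^p ⋯ x_n^p`. -/
noncomputable def hword (k : Type*) [Field k] (p n : ℕ) : FA k :=
  lprod ((List.range n).map (fun t => npow' (Xg k t) p))

/-! # Auxiliary material -/

section LprodLemmas

variable {A : Type*} [NonUnitalSemiring A]

lemma lprod_cons (a : A) {l : List A} (hl : l ≠ []) : lprod (a :: l) = a * lprod l := by
  cases l with
  | nil => exact absurd rfl hl
  | cons b t => rfl

lemma lprod_concat (x : A) : ∀ (l : List A), l ≠ [] → lprod (l.concat x) = lprod l * x := by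
  intro l
  induction l with
  | nil => intro h; exact absurd rfl h
  | cons b t ih =>
    intro _
    cases t with
    | nil => simp [lprod]
    | cons c s =>
      rw [List.concat_cons, lprod_cons b (by simp), lprod_cons b (by simp : (c :: s) ≠ []),
        ih (by simp), mul_assoc]

lemma lprod_ofFn_cons {n : ℕ} (x : A) (f : Fin (n+1) → A) :
    lprod (List.ofFn (Fin.cons x f : Fin (n+2) → A)) = x * lprod (List.ofFn f) := by
  rw [List.ofFn_succ]
  have h1 : (fun i : Fin (n+1) => (Fin.cons x f : Fin (n+2) → A) i.succ) = f := by
    funext i; simp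
  have h0 : (Fin.cons x f : Fin (n+2) → A) 0 = x := by simp
  rw [h0, h1]
  exact lprod_cons x (by simp [List.ofFn_succ])

lemma lprod_ofFn_snoc {n : ℕ} (x : A) (f : Fin (n+1) → A) :
    lprod (List.ofFn (Fin.snoc f x : Fin (n+2) → A)) = lprod (List.ofFn f) * x := by
  rw [List.ofFn_succ' (Fin.snoc f x : Fin (n+2) → A)]
  have h1 : (fun i : Fin (n+1) => (Fin.snoc f x : Fin (n+2) → A) i.castSucc) = f := by
    funext i; simp
  have h0 : (Fin.snoc f x : Fin (n+2) → A) (Fin.last (n+1)) = x := by simp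
  rw [h1, h0]
  exact lprod_concat x _ (by simp [List.ofFn_succ])

lemma lprod_ofFn_one (g : Fin 1 → A) : lprod (List.ofFn g) = g 0 := by
  simp only [List.ofFn_succ, List.ofFn_zero]
  rfl

lemma insertNth_succ_eq_cons {n : ℕ} (pos : Fin (n+1)) (a : A) (v : Fin (n+1) → A) :
    Fin.insertNth (α := fun _ => A) pos.succ a v
      = Fin.cons (v 0) (Fin.insertNth (α := fun _ => A) pos a (Fin.tail v)) := by
  funext i
  refine Fin.succAboveCases pos.succ ?_ ?_ i
  · rw [Fin.insertNth_apply_same]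
    have h : (Fin.cons (v 0) (Fin.insertNth (α := fun _ => A) pos a (Fin.tail v))
        : Fin (n+2) → A) pos.succ
        = Fin.insertNth (α := fun _ => A) pos a (Fin.tail v) pos := Fin.cons_succ _ _ _
    rw [h, Fin.insertNth_apply_same]
  · intro l
    rw [Fin.insertNth_apply_succAbove]
    refine Fin.cases ?_ ?_ l
    · have h0 : pos.succ.succAbove 0 = 0 := by
        rw [Fin.succAbove_of_castSucc_lt]
        · rfl
        · simpa using Fin.succ_pos pos
      rw [h0]
      simp
    · intro l'
      rw [Fin.succ_succAbove_succ]
      have h : (Fin.cons (v 0) (Fin.insertNth (α := fun _ => A) pos a (Fin.tail v))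
          : Fin (n+2) → A) (pos.succAbove l').succ
          = Fin.insertNth (α := fun _ => A) pos a (Fin.tail v) (pos.succAbove l') :=
        Fin.cons_succ _ _ _
      rw [h, Fin.insertNth_apply_succAbove]
      rfl

lemma update_succ_eq_cons {n : ℕ} (j : Fin n) (x : A) (v : Fin (n+1) → A) :
    Function.update v j.succ x = Fin.cons (v 0) (Function.update (Fin.tail v) j x) := by
  funext i
  refine Fin.cases ?_ ?_ i
  · rw [Function.update_of_ne (Fin.succ_ne_zero j).symm]
    simp
  · intro i'
    by_cases h : i' = j
    · subst h
      simp
    · rw [Function.update_of_ne (fun hc => h (Fin.succ_injective _ hc))]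
      have hc : (Fin.cons (v 0) (Function.update (Fin.tail v) j x) : Fin (n+1) → A) i'.succ
          = Function.update (Fin.tail v) j x i' := Fin.cons_succ _ _ _
      rw [hc, Function.update_of_ne h]
      rfl

lemma update_zero_eq_cons {n : ℕ} (x : A) (v : Fin (n+1) → A) :
    Function.update v 0 x = Fin.cons x (Fin.tail v) := by
  funext i
  refine Fin.cases ?_ ?_ i
  · simp
  · intro i'
    rw [Function.update_of_ne (Fin.succ_ne_zero i')]
    simp [Fin.tail]

lemma lprod_insertNth_succ (a : A) :
    ∀ (n : ℕ) (v : Fin (n+1) → A) (j : Fin (n+1)),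
      lprod (List.ofFn (Fin.insertNth (α := fun _ => A) j.succ a v))
        = lprod (List.ofFn (Function.update v j (v j * a))) := by
  intro n
  induction n with
  | zero =>
    intro v j
    obtain rfl : j = 0 := Fin.eq_zero j
    rw [insertNth_succ_eq_cons, Fin.insertNth_zero', update_zero_eq_cons]
    rw [lprod_ofFn_cons, lprod_ofFn_one, lprod_ofFn_one]
    simp
  | succ n' ih =>
    intro v j
    refine Fin.cases ?_ ?_ j
    · rw [insertNth_succ_eq_cons, Fin.insertNth_zero', update_zero_eq_cons]
      rw [lprod_ofFn_cons, lprod_ofFn_cons, lprod_ofFn_cons]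
      rw [← mul_assoc]
    · intro j''
      rw [insertNth_succ_eq_cons, update_succ_eq_cons j'' (v j''.succ * a) v]
      rw [lprod_ofFn_cons, lprod_ofFn_cons]
      have h : v j''.succ = Fin.tail v j'' := rfl
      rw [h, ih (Fin.tail v) j'']

lemma lprod_insertNth_castSucc (a : A) :
    ∀ (n : ℕ) (v : Fin (n+1) → A) (j : Fin (n+1)),
      lprod (List.ofFn (Fin.insertNth (α := fun _ => A) j.castSucc a v))
        = lprod (List.ofFn (Function.update v j (a * v j))) := by
  intro n
  induction n with
  | zero =>
    intro v j
    obtain rfl : j = 0 := Fin.eq_zero j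
    rw [show ((0 : Fin 1).castSucc) = (0 : Fin 2) from rfl, Fin.insertNth_zero',
      update_zero_eq_cons]
    rw [lprod_ofFn_cons, lprod_ofFn_one, lprod_ofFn_one]
    simp
  | succ n' ih =>
    intro v j
    refine Fin.cases ?_ ?_ j
    · rw [show ((0 : Fin (n'+2)).castSucc) = (0 : Fin (n'+3)) from rfl, Fin.insertNth_zero',
        update_zero_eq_cons]
      conv_lhs => rw [← Fin.cons_self_tail v]
      rw [lprod_ofFn_cons, lprod_ofFn_cons, lprod_ofFn_cons]
      rw [← mul_assoc]
    · intro j''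
      rw [← Fin.succ_castSucc, insertNth_succ_eq_cons,
        update_succ_eq_cons j'' (a * v j''.succ) v]
      rw [lprod_ofFn_cons, lprod_ofFn_cons]
      have h : v j''.succ = Fin.tail v j'' := rfl
      rw [h, ih (Fin.tail v) j'']

/-! ### The gap decomposition -/

def permOfPos {e : ℕ} (k : Fin (e+1)) (σ : Equiv.Perm (Fin e)) : Equiv.Perm (Fin (e+1)) :=
  (Equiv.Perm.decomposeFin.symm (0, σ)) * (Fin.cycleRange k)

omit [NonUnitalSemiring A] in
lemma permOfPos_apply_self {e : ℕ} (k : Fin (e+1)) (σ : Equiv.Perm (Fin e)) :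
    permOfPos k σ k = 0 := by
  simp only [permOfPos, Equiv.Perm.mul_apply, Fin.cycleRange_self,
    Equiv.Perm.decomposeFin_symm_apply_zero]

omit [NonUnitalSemiring A] in
lemma permOfPos_apply_succAbove {e : ℕ} (k : Fin (e+1)) (σ : Equiv.Perm (Fin e)) (j : Fin e) :
    permOfPos k σ (k.succAbove j) = (σ j).succ := by
  simp only [permOfPos, Equiv.Perm.mul_apply, Fin.cycleRange_succAbove,
    Equiv.Perm.decomposeFin_symm_apply_succ, Equiv.swap_self, Equiv.refl_apply]

lemma permOfPos_bijective (e : ℕ) :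
    Function.Bijective (fun p : Fin (e+1) × Equiv.Perm (Fin e) => permOfPos p.1 p.2) := by
  rw [Fintype.bijective_iff_injective_and_card]
  constructor
  · rintro ⟨k, σ⟩ ⟨k', σ'⟩ h
    simp only at h
    have hk : k = k' := by
      have h1 : permOfPos k' σ' k = 0 := by rw [← h]; exact permOfPos_apply_self k σ
      have h2 : permOfPos k' σ' k' = 0 := permOfPos_apply_self k' σ'
      exact (permOfPos k' σ').injective (h1.trans h2.symm)
    subst hk
    have hσ : Equiv.Perm.decomposeFin.symm (0, σ) = Equiv.Perm.decomposeFin.symm (0, σ') :=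
      mul_right_cancel h
    have := Equiv.Perm.decomposeFin.symm.injective hσ
    simp only [Prod.mk.injEq] at this
    exact Prod.ext rfl this.2
  · simp [Fintype.card_prod, Fintype.card_perm, Fintype.card_fin, Nat.factorial_succ]

set_option maxHeartbeats 1000000 in
lemma Ssym_succ_eq_sum_insert (e : ℕ) (a : A) (w : Fin e → A) :
    Ssym (e+1) (Fin.cons a w)
      = ∑ k : Fin (e+1), ∑ σ : Equiv.Perm (Fin e),
          lprod (List.ofFn (Fin.insertNth (α := fun _ => A) k a (w ∘ σ))) := by
  rw [Ssym]
  have h2 : ∑ p : Fin (e+1) × Equiv.Perm (Fin e),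
      lprod (List.ofFn (Fin.insertNth (α := fun _ => A) p.1 a (w ∘ p.2)))
      = ∑ τ : Equiv.Perm (Fin (e+1)),
          lprod (List.ofFn (fun i => (Fin.cons a w : Fin (e+1) → A) (τ i))) := by
    refine Fintype.sum_bijective _ (permOfPos_bijective e) _ _ ?_
    rintro ⟨k, σ⟩
    congr 1
    congr 1
    funext i
    refine Fin.succAboveCases k ?_ ?_ i
    · rw [Fin.insertNth_apply_same, permOfPos_apply_self]
      simp
    · intro j
      rw [Fin.insertNth_apply_succAbove, permOfPos_apply_succAbove]
      simp
  exact h2.symm.trans (Fintype.sum_prod_type'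
    (f := fun (k : Fin (e+1)) (σ : Equiv.Perm (Fin e)) =>
      lprod (List.ofFn (Fin.insertNth (α := fun _ => A) k a (w ∘ σ)))))

/-! ### Absorption identities -/

theorem Ssym_cons_left (n : ℕ) (a : A) (z : Fin (n+1) → A) :
    Ssym (n+2) (Fin.cons a z)
      = a * Ssym (n+1) z
        + ∑ i : Fin (n+1), Ssym (n+1) (Function.update z i (z i * a)) := by
  rw [Ssym_succ_eq_sum_insert (n+1) a z, Fin.sum_univ_succ]
  congr 1
  · rw [Ssym, Finset.mul_sum]
    refine Finset.sum_congr rfl fun σ _ => ?_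
    rw [Fin.insertNth_zero', lprod_ofFn_cons]
    rfl
  · calc
      ∑ j : Fin (n+1), ∑ σ : Equiv.Perm (Fin (n+1)),
          lprod (List.ofFn (Fin.insertNth (α := fun _ => A) j.succ a (z ∘ σ)))
        = ∑ j : Fin (n+1), ∑ σ : Equiv.Perm (Fin (n+1)),
            lprod (List.ofFn ((Function.update z (σ j) (z (σ j) * a)) ∘ σ)) := by
          refine Finset.sum_congr rfl fun j _ => Finset.sum_congr rfl fun σ _ => ?_
          rw [lprod_insertNth_succ]
          congr 1
          rw [Function.update_comp_equiv, Equiv.symm_apply_apply]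
          rfl
      _ = ∑ σ : Equiv.Perm (Fin (n+1)), ∑ j : Fin (n+1),
            lprod (List.ofFn ((Function.update z (σ j) (z (σ j) * a)) ∘ σ)) :=
          Finset.sum_comm
      _ = ∑ σ : Equiv.Perm (Fin (n+1)), ∑ i : Fin (n+1),
            lprod (List.ofFn ((Function.update z i (z i * a)) ∘ σ)) := by
          refine Finset.sum_congr rfl fun σ _ => ?_
          exact Equiv.sum_comp σ fun i =>
            lprod (List.ofFn ((Function.update z i (z i * a)) ∘ σ))
      _ = ∑ i : Fin (n+1), ∑ σ : Equiv.Perm (Fin (n+1)),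
            lprod (List.ofFn ((Function.update z i (z i * a)) ∘ σ)) :=
          Finset.sum_comm
      _ = ∑ i : Fin (n+1), Ssym (n+1) (Function.update z i (z i * a)) := rfl

theorem Ssym_cons_right (n : ℕ) (a : A) (z : Fin (n+1) → A) :
    Ssym (n+2) (Fin.cons a z)
      = (∑ i : Fin (n+1), Ssym (n+1) (Function.update z i (a * z i)))
        + Ssym (n+1) z * a := by
  rw [Ssym_succ_eq_sum_insert (n+1) a z, Fin.sum_univ_castSucc]
  congr 1
  · calc
      ∑ j : Fin (n+1), ∑ σ : Equiv.Perm (Fin (n+1)),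
          lprod (List.ofFn (Fin.insertNth (α := fun _ => A) j.castSucc a (z ∘ σ)))
        = ∑ j : Fin (n+1), ∑ σ : Equiv.Perm (Fin (n+1)),
            lprod (List.ofFn ((Function.update z (σ j) (a * z (σ j))) ∘ σ)) := by
          refine Finset.sum_congr rfl fun j _ => Finset.sum_congr rfl fun σ _ => ?_
          rw [lprod_insertNth_castSucc]
          congr 1
          rw [Function.update_comp_equiv, Equiv.symm_apply_apply]
          rfl
      _ = ∑ σ : Equiv.Perm (Fin (n+1)), ∑ j : Fin (n+1),
            lprod (List.ofFn ((Function.update z (σ j) (a * z (σ j))) ∘ σ)) :=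
          Finset.sum_comm
      _ = ∑ σ : Equiv.Perm (Fin (n+1)), ∑ i : Fin (n+1),
            lprod (List.ofFn ((Function.update z i (a * z i)) ∘ σ)) := by
          refine Finset.sum_congr rfl fun σ _ => ?_
          exact Equiv.sum_comp σ fun i =>
            lprod (List.ofFn ((Function.update z i (a * z i)) ∘ σ))
      _ = ∑ i : Fin (n+1), ∑ σ : Equiv.Perm (Fin (n+1)),
            lprod (List.ofFn ((Function.update z i (a * z i)) ∘ σ)) :=
          Finset.sum_comm
      _ = ∑ i : Fin (n+1), Ssym (n+1) (Function.update z i (a * z i)) := rfl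
  · rw [Ssym, Finset.sum_mul]
    refine Finset.sum_congr rfl fun σ _ => ?_
    rw [Fin.insertNth_last', lprod_ofFn_snoc]
    rfl

lemma Ssym_comp_perm (d : ℕ) (y : Fin d → A) (π : Equiv.Perm (Fin d)) :
    Ssym d (y ∘ π) = Ssym d y := by
  rw [Ssym, Ssym]
  exact Fintype.sum_equiv (Equiv.mulLeft π) _ _ (fun σ => rfl)

lemma Ssym_cons_cons_swap (n : ℕ) (a b : A) (t : Fin n → A) :
    Ssym (n+2) (Fin.cons a (Fin.cons b t)) = Ssym (n+2) (Fin.cons b (Fin.cons a t)) := by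
  have h : (Fin.cons a (Fin.cons b t) : Fin (n+2) → A) ∘ (Equiv.swap 0 1)
      = (Fin.cons b (Fin.cons a t) : Fin (n+2) → A) := by
    funext i
    refine Fin.cases ?_ ?_ i
    · have h0 : (Equiv.swap (0 : Fin (n+2)) 1) 0 = 1 := Equiv.swap_apply_left 0 1
      simp only [Function.comp_apply, h0]
      rw [show (1 : Fin (n+2)) = Fin.succ 0 from (Fin.succ_zero_eq_one).symm]
      rw [show (Fin.cons a (Fin.cons b t) : Fin (n+2) → A) (Fin.succ 0)
          = (Fin.cons b t : Fin (n+1) → A) 0 from Fin.cons_succ _ _ _]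
      simp
    · intro i'
      refine Fin.cases ?_ ?_ i'
      · have h1 : (Equiv.swap (0 : Fin (n+2)) 1) (Fin.succ 0) = 0 := by
          rw [Fin.succ_zero_eq_one]; exact Equiv.swap_apply_right 0 1
        simp only [Function.comp_apply, h1]
        rw [show (Fin.cons b (Fin.cons a t) : Fin (n+2) → A) (Fin.succ 0)
            = (Fin.cons a t : Fin (n+1) → A) 0 from Fin.cons_succ _ _ _]
        simp
      · intro i''
        have h2 : (Equiv.swap (0 : Fin (n+2)) 1) (Fin.succ (Fin.succ i''))
            = Fin.succ (Fin.succ i'') := by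
          refine Equiv.swap_apply_of_ne_of_ne (Fin.succ_ne_zero _) ?_
          exact Fin.succ_succ_ne_one i''
        simp only [Function.comp_apply, h2]
        rw [show (Fin.cons a (Fin.cons b t) : Fin (n+2) → A) (Fin.succ (Fin.succ i''))
            = (Fin.cons b t : Fin (n+1) → A) (Fin.succ i'') from Fin.cons_succ _ _ _]
        rw [show (Fin.cons b (Fin.cons a t) : Fin (n+2) → A) (Fin.succ (Fin.succ i''))
            = (Fin.cons a t : Fin (n+1) → A) (Fin.succ i'') from Fin.cons_succ _ _ _]
        rw [show (Fin.cons b t : Fin (n+1) → A) (Fin.succ i'') = t i'' from Fin.cons_succ _ _ _]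
        rw [show (Fin.cons a t : Fin (n+1) → A) (Fin.succ i'') = t i'' from Fin.cons_succ _ _ _]
  calc Ssym (n+2) (Fin.cons a (Fin.cons b t))
      = Ssym (n+2) ((Fin.cons a (Fin.cons b t) : Fin (n+2) → A) ∘ (Equiv.swap 0 1)) :=
        (Ssym_comp_perm _ _ _).symm
    _ = Ssym (n+2) (Fin.cons b (Fin.cons a t)) := by rw [h]

end LprodLemmas

/-! ### T-space machinery -/

section TSpaceMachinery

variable {k : Type*} [Field k]

lemma mem_TSpan_of_mem {S : Set (FA k)} {s : FA k} (hs : s ∈ S) : s ∈ TSpan k S :=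
  Submodule.subset_span ⟨NonUnitalAlgHom.id k (FA k), s, hs, rfl⟩

lemma span_le_TSpan (S : Set (FA k)) : Submodule.span k S ≤ TSpan k S :=
  Submodule.span_le.mpr fun _ hs => mem_TSpan_of_mem hs

lemma isTSpace_TSpan (S : Set (FA k)) : IsTSpace k (TSpan k S) := by
  intro φ v hv
  induction hv using Submodule.span_induction with
  | mem x hx =>
    obtain ⟨ψ, s, hs, rfl⟩ := hx
    exact Submodule.subset_span ⟨φ.comp ψ, s, hs, rfl⟩
  | zero => simpa using (TSpan k S).zero_mem
  | add x y hx hy ihx ihy => simpa [map_add] using (TSpan k S).add_mem ihx ihy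
  | smul c x hx ihx => simpa [map_smul] using (TSpan k S).smul_mem c ihx

/-- span-product of two submodules -/
noncomputable def SP (U V : Submodule k (FA k)) : Submodule k (FA k) :=
  Submodule.span k (mulSet U V)

lemma mul_mem_SP {U V : Submodule k (FA k)} {u v : FA k} (hu : u ∈ U) (hv : v ∈ V) :
    u * v ∈ SP U V :=
  Submodule.subset_span ⟨u, hu, v, hv, rfl⟩

lemma SP_le {U V P : Submodule k (FA k)} (h : ∀ u ∈ U, ∀ v ∈ V, u * v ∈ P) :
    SP U V ≤ P := by
  refine Submodule.span_le.mpr ?_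
  rintro a ⟨u, hu, v, hv, rfl⟩
  exact h u hu v hv

lemma TSpan_mulSet_eq_SP {U V : Submodule k (FA k)} (hU : IsTSpace k U) (hV : IsTSpace k V) :
    TSpan k (mulSet U V) = SP U V := by
  refine le_antisymm ?_ (span_le_TSpan _)
  refine Submodule.span_le.mpr ?_
  rintro a ⟨φ, s, ⟨u, hu, v, hv, rfl⟩, rfl⟩
  rw [map_mul]
  exact mul_mem_SP (hU φ u hu) (hV φ v hv)

lemma SP_assoc (U V W : Submodule k (FA k)) : SP (SP U V) W = SP U (SP V W) := by
  refine le_antisymm ?_ ?_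
  · refine SP_le ?_
    intro x hx w hw
    induction hx using Submodule.span_induction with
    | mem a ha =>
      obtain ⟨u, hu, v, hv, rfl⟩ := ha
      rw [mul_assoc]
      exact mul_mem_SP hu (mul_mem_SP hv hw)
    | zero => simpa using (SP U (SP V W)).zero_mem
    | add x y hx hy ihx ihy => simpa [add_mul] using (SP U (SP V W)).add_mem ihx ihy
    | smul c x hx ihx => simpa [smul_mul_assoc] using (SP U (SP V W)).smul_mem c ihx
  · refine SP_le ?_
    intro u hu z hz
    induction hz using Submodule.span_induction with
    | mem a ha =>
      obtain ⟨v, hv, w, hw, rfl⟩ := ha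
      rw [← mul_assoc]
      exact mul_mem_SP (mul_mem_SP hu hv) hw
    | zero => simpa using (SP (SP U V) W).zero_mem
    | add x y hx hy ihx ihy => simpa [mul_add] using (SP (SP U V) W).add_mem ihx ihy
    | smul c x hx ihx => simpa [mul_smul_comm] using (SP (SP U V) W).smul_mem c ihx

lemma Sn_one_eq (d : ℕ) : Sn k d 1 = TSpan k {Ssym d (fun i => Xg k i)} := by
  simp only [Sn]

lemma Sn_add_two_eq (d n : ℕ) :
    Sn k d (n+2) = TSpan k (mulSet (Sn k d (n+1)) (Sn k d 1)) := by
  simp only [Sn]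

lemma isTSpace_Sn (d n : ℕ) : IsTSpace k (Sn k d n) := by
  match n with
  | 0 =>
    intro φ v hv
    have hv0 : v = 0 := by simpa [Sn] using hv
    subst hv0
    simpa using (Sn k d 0).zero_mem
  | 1 => rw [Sn_one_eq]; exact isTSpace_TSpan _
  | (n+2) => rw [Sn_add_two_eq]; exact isTSpace_TSpan _

lemma Sn_succ_eq (d n : ℕ) (hn : 1 ≤ n) : Sn k d (n+1) = SP (Sn k d n) (Sn k d 1) := by
  obtain ⟨n', rfl⟩ : ∃ n', n = n' + 1 := ⟨n - 1, by omega⟩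
  rw [Sn_add_two_eq]
  exact TSpan_mulSet_eq_SP (isTSpace_Sn d _) (isTSpace_Sn d _)

lemma SP_Sn_eq (d : ℕ) : ∀ n, 1 ≤ n → ∀ m, 1 ≤ m →
    SP (Sn k d m) (Sn k d n) = Sn k d (m + n) := by
  intro n
  induction n with
  | zero => omega
  | succ n ih =>
    intro _ m hm
    rcases Nat.eq_or_lt_of_le (show 1 ≤ n + 1 from by omega) with h1 | h1
    · obtain rfl : n = 0 := by omega
      exact (Sn_succ_eq d m hm).symm
    · have hn : 1 ≤ n := by omega
      rw [Sn_succ_eq d n hn, ← SP_assoc, ih hn m hm, ← Sn_succ_eq d (m+n) (by omega)]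
      rfl

/-! ### Substitutions and instances -/

/-- substitution endomorphism with prescribed values on generators -/
noncomputable def subst (z : ℕ → FA k) : FA k →ₙₐ[k] FA k :=
  MonoidAlgebra.liftMagma k (FreeSemigroup.lift z)

lemma subst_Xg (z : ℕ → FA k) (i : ℕ) : subst z (Xg k i) = z i := by
  rw [subst, Xg, MonoidAlgebra.liftMagma_apply_apply]
  simp

lemma map_lprod' (φ : FA k →ₙₐ[k] FA k) :
    ∀ (l : List (FA k)), φ (lprod l) = lprod (l.map φ)
  | [] => by simp [lprod]
  | [a] => by simp [lprod]
  | a :: b :: l => by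
    rw [show lprod (a :: b :: l) = a * lprod (b :: l) from rfl, map_mul,
      map_lprod' φ (b :: l)]
    rfl

lemma map_Ssym (φ : FA k →ₙₐ[k] FA k) (d : ℕ) (y : Fin d → FA k) :
    φ (Ssym d y) = Ssym d (fun i => φ (y i)) := by
  rw [Ssym, Ssym, map_sum]
  refine Finset.sum_congr rfl fun σ _ => ?_
  rw [map_lprod', List.map_ofFn]
  rfl

lemma Ssym_mem_Sn1 (d : ℕ) (z : Fin d → FA k) : Ssym d z ∈ Sn k d 1 := by
  classical
  rw [Sn_one_eq]
  set z' : ℕ → FA k := fun i => if h : i < d then z ⟨i, h⟩ else 0 with hz'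
  have h1 : (fun i : Fin d => subst z' (Xg k i)) = z := by
    funext i
    rw [subst_Xg]
    simp [hz', i.isLt]
  refine Submodule.subset_span ⟨subst z', Ssym d (fun i => Xg k i), rfl, ?_⟩
  rw [map_Ssym, h1]

end TSpaceMachinery

/-! ### The key membership lemma -/

section KeyLemma

variable {k : Type*} [Field k]

lemma fSg_mem (d m : ℕ) (hd : 1 ≤ d) (hm : 1 ≤ m)
    {f g : FA k} (hf : f ∈ Sn k d m) (hg : g ∈ Sn k d m) (y : Fin d → FA k) :
    f * Ssym d y * g ∈ Sn k d (m+1) ⊔ Sn k d 1 := by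
  obtain ⟨n, rfl⟩ : ∃ n, d = n + 1 := ⟨d - 1, by omega⟩
  set V := Sn k (n+1) (m+1) ⊔ Sn k (n+1) 1 with hV
  have hSP : Sn k (n+1) (m+1) = SP (Sn k (n+1) m) (Sn k (n+1) 1) := Sn_succ_eq (n+1) m hm
  have hS1 : ∀ z : Fin (n+1) → FA k, Ssym (n+1) z ∈ V :=
    fun z => Submodule.mem_sup_right (Ssym_mem_Sn1 (n+1) z)
  have hfS : ∀ z : Fin (n+1) → FA k, f * Ssym (n+1) z ∈ V := fun z =>
    Submodule.mem_sup_left (by rw [hSP]; exact mul_mem_SP hf (Ssym_mem_Sn1 (n+1) z))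
  have hgS : ∀ z : Fin (n+1) → FA k, g * Ssym (n+1) z ∈ V := fun z =>
    Submodule.mem_sup_left (by rw [hSP]; exact mul_mem_SP hg (Ssym_mem_Sn1 (n+1) z))
  set ty := Fin.tail y with hty
  set w : Fin (n+1) → FA k := Fin.cons g ty with hw
  set w' : Fin (n+1) → FA k := Fin.cons (f * y 0) ty with hw'
  have e1 : Ssym (n+1) y * g
      = Ssym (n+2) (Fin.cons g y)
        - ∑ i : Fin (n+1), Ssym (n+1) (Function.update y i (g * y i)) := by
    rw [Ssym_cons_right n g y]
    abel
  have e2 : Ssym (n+2) (Fin.cons g y) = Ssym (n+2) (Fin.cons (y 0) w) := by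
    rw [hw, hty]
    conv_lhs => rw [← Fin.cons_self_tail y]
    exact Ssym_cons_cons_swap n g (y 0) (Fin.tail y)
  have e3 : Ssym (n+2) (Fin.cons (y 0) w)
      = y 0 * Ssym (n+1) w
        + ∑ i : Fin (n+1), Ssym (n+1) (Function.update w i (w i * y 0)) :=
    Ssym_cons_left n (y 0) w
  have e4 : (f * y 0) * Ssym (n+1) w
      = Ssym (n+2) (Fin.cons (f * y 0) w)
        - ∑ i : Fin (n+1), Ssym (n+1) (Function.update w i (w i * (f * y 0))) := by
    rw [Ssym_cons_left n (f * y 0) w]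
    abel
  have e5 : Ssym (n+2) (Fin.cons (f * y 0) w) = Ssym (n+2) (Fin.cons g w') := by
    rw [hw, hw']
    exact Ssym_cons_cons_swap n (f * y 0) g ty
  have e6 : Ssym (n+2) (Fin.cons g w')
      = g * Ssym (n+1) w'
        + ∑ i : Fin (n+1), Ssym (n+1) (Function.update w' i (w' i * g)) :=
    Ssym_cons_left n g w'
  have m6 : Ssym (n+2) (Fin.cons g w') ∈ V := by
    rw [e6]
    exact V.add_mem (hgS w') (V.sum_mem (fun i _ => hS1 _))
  have m4 : (f * y 0) * Ssym (n+1) w ∈ V := by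
    rw [e4, e5]
    exact V.sub_mem m6 (V.sum_mem (fun i _ => hS1 _))
  have m3 : f * Ssym (n+2) (Fin.cons g y) ∈ V := by
    rw [e2, e3, mul_add, Finset.mul_sum, ← mul_assoc]
    exact V.add_mem m4 (V.sum_mem (fun i _ => hfS _))
  have efin : f * Ssym (n+1) y * g
      = f * Ssym (n+2) (Fin.cons g y)
        - ∑ i : Fin (n+1), f * Ssym (n+1) (Function.update y i (g * y i)) := by
    rw [mul_assoc, e1, mul_sub, Finset.mul_sum]
  rw [show Sn k (n+1) (m+1) ⊔ Sn k (n+1) 1 = V from hV.symm] at *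
  rw [efin]
  exact V.sub_mem m3 (V.sum_mem (fun i _ => hfS _))

lemma f_c_g_mem (d m : ℕ) (hd : 1 ≤ d) (hm : 1 ≤ m)
    {f g c : FA k} (hf : f ∈ Sn k d m) (hg : g ∈ Sn k d m) (hc : c ∈ Sn k d 1) :
    f * c * g ∈ Sn k d (m+1) ⊔ Sn k d 1 := by
  rw [Sn_one_eq] at hc
  induction hc using Submodule.span_induction with
  | mem a ha =>
    obtain ⟨φ, s, hs, rfl⟩ := ha
    rw [Set.mem_singleton_iff] at hs
    subst hs
    rw [map_Ssym]
    exact fSg_mem d m hd hm hf hg _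
  | zero => simpa using (Sn k d (m+1) ⊔ Sn k d 1).zero_mem
  | add x y hx hy ihx ihy =>
    have : f * (x + y) * g = f * x * g + f * y * g := by rw [mul_add, add_mul]
    rw [this]
    exact (Sn k d (m+1) ⊔ Sn k d 1).add_mem ihx ihy
  | smul a x hx ihx =>
    have : f * (a • x) * g = a • (f * x * g) := by
      rw [mul_smul_comm, smul_mul_assoc]
    rw [this]
    exact (Sn k d (m+1) ⊔ Sn k d 1).smul_mem a ihx

end KeyLemma

/-- (i) `(S_m^{(d)} S_n^{(d)})^S = S_{m+n}^{(d)}` for all `m, n ≥ 1`, and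
(ii) `S_{2m+1}^{(d)} ⊆ S_{m+1}^{(d)} + S_1^{(d)}` for all `m ≥ 1`. -/
theorem Sn_mul_and_odd (k : Type*) [Field k] (p : ℕ) (hp : p.Prime) [CharP k p]
    (d : ℕ) (hd : 1 ≤ d) :
    (∀ m n : ℕ, 1 ≤ m → 1 ≤ n →
        TSpan k (mulSet (Sn k d m) (Sn k d n)) = Sn k d (m + n)) ∧
    (∀ m : ℕ, 1 ≤ m → Sn k d (2 * m + 1) ≤ Sn k d (m + 1) ⊔ Sn k d 1) := by
  constructor
  · intro m n hm hn
    rw [TSpan_mulSet_eq_SP (isTSpace_Sn d m) (isTSpace_Sn d n), SP_Sn_eq d n hn m hm]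
  · intro m hm
    have ha : SP (Sn k d 1) (Sn k d m) = Sn k d (m+1) := by
      rw [SP_Sn_eq d m hm 1 le_rfl, show 1 + m = m + 1 from by omega]
    have hb : Sn k d (2*m+1) = SP (Sn k d m) (Sn k d (m+1)) := by
      rw [SP_Sn_eq d (m+1) (by omega) m hm, show m + (m+1) = 2*m+1 from by omega]
    conv_lhs => rw [hb, ← ha]
    refine SP_le ?_
    intro f hf z hz
    induction hz using Submodule.span_induction with
    | mem a haa =>
      obtain ⟨c, hc, g, hg, rfl⟩ := haa
      rw [← mul_assoc]
      exact f_c_g_mem d m hd hm hf hg hc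
    | zero => simpa using (Sn k d (m+1) ⊔ Sn k d 1).zero_mem
    | add x y hx hy ihx ihy =>
      rw [mul_add]
      exact (Sn k d (m+1) ⊔ Sn k d 1).add_mem ihx ihy
    | smul a x hx ihx =>
      rw [mul_smul_comm]
      exact (Sn k d (m+1) ⊔ Sn k d 1).smul_mem a ihx
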